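/- arXiv:1804.04580 — 2 statements merged into one kernel-verified Lean document; each statement's English description precedes it below -/
import Mathlib

section
/- Given positive definite B and the affine upper bound U(Q) = log det(Γ) + Tr(Γ⁻¹ B(Q)) − n with B(Q) = A(Q) − G Q Gᵀ affine in Q, the set {Q ⪰ 0 : log det(A(Q)) − U(Q) ≥ ψ} is a convex subset of the set {Q ⪰ 0 : log det(A(Q)) − log det(B(Q)) ≥ ψ}. -/
open Matrix


-- helper: smul PSD
lemma psd_smul {m : ℕ} {c : ℝ} (hc : 0 ≤ c) {M : Matrix (Fin m) (Fin m) ℝ}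
    (hM : M.PosSemidef) : (c • M).PosSemidef := by
  refine posSemidef_iff_dotProduct_mulVec.mpr ⟨?_, fun x => ?_⟩
  · unfold Matrix.IsHermitian
    rw [conjTranspose_smul, hM.1.eq]
    simp
  · rw [smul_mulVec, dotProduct_smul, smul_eq_mul]
    exact mul_nonneg hc (hM.dotProduct_mulVec_nonneg x)

-- helper: trace = sum of eigenvalues
lemma trace_eq_sum_eig {m : ℕ} {M : Matrix (Fin m) (Fin m) ℝ} (hM : M.IsHermitian) :
    M.trace = ∑ i, hM.eigenvalues i := by
  nth_rewrite 1 [hM.spectral_theorem]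
  rw [Unitary.conjStarAlgAut_apply, Matrix.trace_mul_cycle]
  have h1 : (star (hM.eigenvectorUnitary : Matrix (Fin m) (Fin m) ℝ)) *
      (hM.eigenvectorUnitary : Matrix (Fin m) (Fin m) ℝ) = 1 := by
    exact_mod_cast hM.eigenvectorUnitary.2.1
  rw [h1, one_mul, trace_diagonal]
  simp
section
variable {m : ℕ}

lemma my_log_det_le_trace {M : Matrix (Fin m) (Fin m) ℝ} (hM : M.PosDef) :
    Real.log M.det ≤ M.trace - m := by
  have hherm := hM.isHermitian
  have heig : ∀ i, 0 < hherm.eigenvalues i := hM.eigenvalues_pos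
  have hdet : M.det = ∏ i, hherm.eigenvalues i := by
    simpa using hherm.det_eq_prod_eigenvalues
  rw [hdet, Real.log_prod (fun i _ => (heig i).ne'), trace_eq_sum_eig hherm]
  calc ∑ i, Real.log (hherm.eigenvalues i) ≤ ∑ i, (hherm.eigenvalues i - 1) :=
        Finset.sum_le_sum (fun i _ => Real.log_le_sub_one_of_pos (heig i))
    _ = (∑ i, hherm.eigenvalues i) - m := by rw [Finset.sum_sub_distrib]; simp

lemma my_posdef_conj {T B : Matrix (Fin m) (Fin m) ℝ} (hB : B.PosDef)
    (hT : T.IsHermitian) (hTdet : IsUnit T.det) : (T * B * T).PosDef := by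
  have hTT : Tᵀ = T := hT.eq
  refine posDef_iff_dotProduct_mulVec.mpr ⟨?_, fun x hx => ?_⟩
  · unfold Matrix.IsHermitian
    simp only [conjTranspose_mul, hT.eq, hB.1.eq, mul_assoc]
  · have hTx : T *ᵥ x ≠ 0 := by
      intro h
      apply hx
      have h2 : T⁻¹ *ᵥ (T *ᵥ x) = x := by
        rw [mulVec_mulVec, nonsing_inv_mul _ hTdet, one_mulVec]
      rw [h, mulVec_zero] at h2
      exact h2.symm
    have key : star x ⬝ᵥ (T * B * T) *ᵥ x = star (T *ᵥ x) ⬝ᵥ B *ᵥ (T *ᵥ x) := by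
      rw [← mulVec_mulVec, ← mulVec_mulVec, dotProduct_mulVec, ← mulVec_transpose, hTT]
      congr 1
    rw [key]
    exact hB.dotProduct_mulVec_pos hTx



/-- abstract square root -/
lemma my_exists_sqrt {X : Matrix (Fin m) (Fin m) ℝ} (hX : X.PosDef) :
    ∃ S : Matrix (Fin m) (Fin m) ℝ, S.IsHermitian ∧ S * S = X :=
  open scoped MatrixOrder in
  ⟨CFC.sqrt X, (nonneg_iff_posSemidef.mp (CFC.sqrt_nonneg X)).isHermitian,
    CFC.sqrt_mul_sqrt_self X hX.posSemidef.nonneg⟩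

/-- abstract spectral theorem -/
lemma my_spectral {M : Matrix (Fin m) (Fin m) ℝ} (hM : M.PosDef) :
    ∃ (U : Matrix (Fin m) (Fin m) ℝ) (lam : Fin m → ℝ),
      U * star U = 1 ∧ star U * U = 1 ∧ M = U * diagonal lam * star U ∧ ∀ i, 0 < lam i := by
  have hMh : M.IsHermitian := hM.isHermitian
  refine ⟨hMh.eigenvectorUnitary, hMh.eigenvalues, ?_, ?_, ?_, hM.eigenvalues_pos⟩
  · exact_mod_cast hMh.eigenvectorUnitary.2.2
  · exact_mod_cast hMh.eigenvectorUnitary.2.1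
  · have := hMh.spectral_theorem
    rw [Unitary.conjStarAlgAut_apply] at this
    exact this

lemma my_fenchel {Γ B : Matrix (Fin m) (Fin m) ℝ} (hΓ : Γ.PosDef) (hB : B.PosDef) :
    Real.log B.det ≤ Real.log Γ.det + (Γ⁻¹ * B).trace - m := by
  have hΓi : (Γ⁻¹).PosDef := hΓ.inv
  obtain ⟨T, hTherm, hTT⟩ := my_exists_sqrt hΓi
  have hdetsq : T.det * T.det = (Γ⁻¹).det := by rw [← det_mul, hTT]
  have hΓidet : 0 < (Γ⁻¹).det := hΓi.det_pos
  have hTdet : IsUnit T.det := by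
    refine isUnit_iff_ne_zero.mpr fun h => ?_
    rw [h, mul_zero] at hdetsq
    linarith
  have hM : (T * B * T).PosDef := my_posdef_conj hB hTherm hTdet
  have h1 := my_log_det_le_trace hM
  have htr : (T * B * T).trace = (Γ⁻¹ * B).trace := by
    rw [trace_mul_cycle, hTT]
  have hdet2 : (T * B * T).det = (Γ⁻¹).det * B.det := by
    rw [det_mul, det_mul, ← hdetsq]; ring
  have hiv : (Γ⁻¹).det = (Γ.det)⁻¹ := by
    rw [det_nonsing_inv, Ring.inverse_eq_inv']
  have hBd : (0:ℝ) < B.det := hB.det_pos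
  have hΓd : (0:ℝ) < Γ.det := hΓ.det_pos
  rw [hdet2, Real.log_mul (ne_of_gt hΓidet) (ne_of_gt hBd), hiv, Real.log_inv] at h1
  rw [htr] at h1
  linarith

lemma my_logdet_concave {X Y : Matrix (Fin m) (Fin m) ℝ} (hX : X.PosDef) (hY : Y.PosDef)
    {a b : ℝ} (ha : 0 ≤ a) (hb : 0 ≤ b) (hab : a + b = 1) :
    a * Real.log X.det + b * Real.log Y.det ≤ Real.log (a • X + b • Y).det := by
  have hXd : (0:ℝ) < X.det := hX.det_pos
  have hYd : (0:ℝ) < Y.det := hY.det_pos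
  obtain ⟨S, hSherm, hSS⟩ := my_exists_sqrt hX
  have hdetsq : S.det * S.det = X.det := by rw [← det_mul, hSS]
  have hSdet : IsUnit S.det := by
    refine isUnit_iff_ne_zero.mpr fun h => ?_
    rw [h, mul_zero] at hdetsq
    linarith
  have hSidet : IsUnit (S⁻¹).det := by
    rw [det_nonsing_inv, Ring.inverse_eq_inv']
    exact isUnit_iff_ne_zero.mpr (inv_ne_zero (isUnit_iff_ne_zero.mp hSdet))
  have hSiherm : (S⁻¹).IsHermitian := by
    unfold Matrix.IsHermitian
    rw [conjTranspose_nonsing_inv, hSherm.eq]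
  have hMpd : (S⁻¹ * Y * S⁻¹).PosDef := my_posdef_conj hY hSiherm hSidet
  set M := S⁻¹ * Y * S⁻¹ with hMdefn
  -- identity
  have hid : a • X + b • Y = S * (a • (1 : Matrix (Fin m) (Fin m) ℝ) + b • M) * S := by
    have h1 : S * (a • (1 : Matrix (Fin m) (Fin m) ℝ)) * S = a • X := by
      rw [Matrix.mul_smul, Matrix.smul_mul, mul_one, hSS]
    have h2 : S * (b • M) * S = b • Y := by
      rw [Matrix.mul_smul, Matrix.smul_mul, hMdefn]
      congr 1
      rw [show S * (S⁻¹ * Y * S⁻¹) * S = (S * S⁻¹) * Y * (S⁻¹ * S) by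
        simp only [mul_assoc], mul_nonsing_inv _ hSdet, nonsing_inv_mul _ hSdet,
        one_mul, mul_one]
    rw [Matrix.mul_add, Matrix.add_mul, h1, h2]
  obtain ⟨U, lam, hU1, hU2, hspec, heigpos⟩ := my_spectral hMpd
  have hdiag : a • (1 : Matrix (Fin m) (Fin m) ℝ) + b • M
      = U * (a • (1 : Matrix (Fin m) (Fin m) ℝ) + b • diagonal lam) * star U := by
    rw [Matrix.mul_add, Matrix.add_mul, Matrix.mul_smul, Matrix.smul_mul,
      Matrix.mul_smul, Matrix.smul_mul, mul_one, hU1, ← hspec]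
  have hDform : a • (1 : Matrix (Fin m) (Fin m) ℝ) + b • diagonal lam
      = diagonal (fun i => a + b * lam i) := by
    ext i j
    by_cases h : i = j
    · subst h; simp [Matrix.diagonal_apply, Matrix.one_apply]
    · simp [Matrix.diagonal_apply, Matrix.one_apply, h]
  have hdetU : U.det * (star U).det = 1 := by rw [← det_mul, hU1, det_one]
  have hfacpos : ∀ i, 0 < a + b * lam i := by
    intro i
    rcases lt_or_eq_of_le ha with h | h
    · have : 0 ≤ b * lam i := mul_nonneg hb (heigpos i).le
      linarith
    · have hb1 : b = 1 := by linarith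
      rw [← h, hb1]; simpa using heigpos i
  have hdetcombo : (a • X + b • Y).det = X.det * ∏ i, (a + b * lam i) := by
    rw [hid, det_mul, det_mul, hdiag, det_mul, det_mul, hDform, det_diagonal]
    rw [← hdetsq]
    rw [show S.det * (U.det * (∏ i, (a + b * lam i)) * (star U).det) * S.det
      = (S.det * S.det) * (U.det * (star U).det) * ∏ i, (a + b * lam i) by ring, hdetU]
    ring
  -- det M
  have hMdetprod : M.det = ∏ i, lam i := by
    rw [hspec, det_mul, det_mul, det_diagonal,
      show U.det * (∏ i, lam i) * (star U).det
        = (U.det * (star U).det) * ∏ i, lam i by ring, hdetU, one_mul]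
  have hMdet2 : M.det * X.det = Y.det := by
    rw [hMdefn, det_mul, det_mul, det_nonsing_inv, Ring.inverse_eq_inv', ← hdetsq]
    have hS0 : S.det ≠ 0 := isUnit_iff_ne_zero.mp hSdet
    field_simp
  have hMdetpos : 0 < M.det := by
    rw [hMdetprod]
    exact Finset.prod_pos (fun i _ => heigpos i)
  have hMdetlog : Real.log M.det = Real.log Y.det - Real.log X.det := by
    have : M.det = Y.det / X.det := by
      field_simp [ne_of_gt hXd]
      linarith [hMdet2]
    rw [this, Real.log_div (ne_of_gt hYd) (ne_of_gt hXd)]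
  -- concavity of log pointwise
  have hkey : ∀ i, b * Real.log (lam i) ≤ Real.log (a + b * lam i) := by
    intro i
    have := strictConcaveOn_log_Ioi.concaveOn.2 (Set.mem_Ioi.mpr one_pos)
      (Set.mem_Ioi.mpr (heigpos i)) ha hb hab
    simpa using this
  rw [hdetcombo, Real.log_mul (ne_of_gt hXd)
    (Finset.prod_ne_zero_iff.mpr (fun i _ => (hfacpos i).ne')),
    Real.log_prod (fun i _ => (hfacpos i).ne')]
  have hsum : b * Real.log M.det ≤ ∑ i, Real.log (a + b * lam i) := by
    rw [hMdetprod, Real.log_prod (fun i _ => (heigpos i).ne'), Finset.mul_sum]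
    exact Finset.sum_le_sum (fun i _ => hkey i)
  rw [hMdetlog] at hsum
  have haX : a * Real.log X.det = Real.log X.det - b * Real.log X.det := by
    rw [show a = 1 - b by linarith]; ring
  linarith

end

/-- Lemma 1: with `A(Q)` affine and `B(Q) = A(Q) − G Q Gᵀ`, both positive definite on
the PSD cone, and a fixed positive definite `Γ`, the convexified feasible set
`S' = {Q ⪰ 0 : log det A(Q) − U(Q) ≥ ψ}` — where
`U(Q) = log det Γ + Tr(Γ⁻¹ B(Q)) − n` is the affine Fenchel upper bound — is a convex
subset of the original feasible set `S = {Q ⪰ 0 : log det A(Q) − log det B(Q) ≥ ψ}`. -/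

theorem convexified_set_subset {n k : ℕ}
    (A : Matrix (Fin k) (Fin k) ℝ →ᵃ[ℝ] Matrix (Fin n) (Fin n) ℝ)
    (G : Matrix (Fin n) (Fin k) ℝ) (B : Matrix (Fin k) (Fin k) ℝ → Matrix (Fin n) (Fin n) ℝ)
    (hBdef : ∀ Q, B Q = A Q - G * Q * Gᵀ)
    (Γ : Matrix (Fin n) (Fin n) ℝ) (hΓ : Γ.PosDef)
    (hpos : ∀ Q : Matrix (Fin k) (Fin k) ℝ, Q.PosSemidef → (A Q).PosDef ∧ (B Q).PosDef)
    (ψ : ℝ) :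
    Convex ℝ {Q : Matrix (Fin k) (Fin k) ℝ | Q.PosSemidef ∧
        ψ ≤ Real.log (A Q).det - (Real.log Γ.det + (Γ⁻¹ * B Q).trace - n)} ∧
    {Q : Matrix (Fin k) (Fin k) ℝ | Q.PosSemidef ∧
        ψ ≤ Real.log (A Q).det - (Real.log Γ.det + (Γ⁻¹ * B Q).trace - n)} ⊆
      {Q : Matrix (Fin k) (Fin k) ℝ | Q.PosSemidef ∧
        ψ ≤ Real.log (A Q).det - Real.log (B Q).det} := by
  constructor
  · -- convexity
    rintro Q1 ⟨hQ1psd, hQ1⟩ Q2 ⟨hQ2psd, hQ2⟩ a b ha hb hab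
    have hcpsd : (a • Q1 + b • Q2).PosSemidef :=
      (psd_smul ha hQ1psd).add (psd_smul hb hQ2psd)
    refine ⟨hcpsd, ?_⟩
    obtain ⟨hA1, hB1⟩ := hpos Q1 hQ1psd
    obtain ⟨hA2, hB2⟩ := hpos Q2 hQ2psd
    have hAc : A (a • Q1 + b • Q2) = a • A Q1 + b • A Q2 := Convex.combo_affine_apply hab
    have hBc : B (a • Q1 + b • Q2) = a • B Q1 + b • B Q2 := by
      rw [hBdef, hBdef, hBdef, hAc]
      simp only [Matrix.mul_add, Matrix.add_mul, Matrix.mul_smul, Matrix.smul_mul, smul_sub]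
      abel
    have htr : (Γ⁻¹ * B (a • Q1 + b • Q2)).trace
        = a * (Γ⁻¹ * B Q1).trace + b * (Γ⁻¹ * B Q2).trace := by
      rw [hBc, Matrix.mul_add, Matrix.mul_smul, Matrix.mul_smul, trace_add, trace_smul,
        trace_smul]
      simp [smul_eq_mul]
    have hconc := my_logdet_concave hA1 hA2 ha hb hab
    rw [← hAc] at hconc
    have h1 : a * ψ
        ≤ a * (Real.log (A Q1).det - (Real.log Γ.det + (Γ⁻¹ * B Q1).trace - n)) :=
      mul_le_mul_of_nonneg_left hQ1 ha
    have h2 : b * ψ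
        ≤ b * (Real.log (A Q2).det - (Real.log Γ.det + (Γ⁻¹ * B Q2).trace - n)) :=
      mul_le_mul_of_nonneg_left hQ2 hb
    have e1 : a * ψ + b * ψ = ψ := by rw [← add_mul, hab, one_mul]
    have e2 : a * Real.log Γ.det + b * Real.log Γ.det = Real.log Γ.det := by
      rw [← add_mul, hab, one_mul]
    have e3 : a * (n : ℝ) + b * (n : ℝ) = (n : ℝ) := by rw [← add_mul, hab, one_mul]
    rw [htr]
    linarith
  · -- subset
    rintro Q ⟨hQpsd, hQ⟩
    obtain ⟨hApd, hBpd⟩ := hpos Q hQpsd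
    refine ⟨hQpsd, ?_⟩
    have hf := my_fenchel hΓ hBpd
    linarith
end

section
/- In the successive convex approximation algorithm, if at iteration t the bound matrix is updated as Γ^(t+1) = B(Q^(t)), then the approximate rate lower bound R̃ evaluated at Q^(t) with Γ^(t+1) equals the true rate R̄(Q^(t)); consequently Q^(t) remains feasible at iteration t+1 and the sequence of optimal objective values P_Σ^(t) is non-increasing. -/
open Matrix

/-- Successive convex approximation step: with true rate
`R̄(Q) = log det A(Q) − log det B(Q)` and concave lower bound
`R̃(Q; Γ) = log det A(Q) − log det Γ − Tr(Γ⁻¹ B(Q)) + n`, if the bound matrix is updated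
as `Γ = B(Q^(t))` then the bound is tight at `Q^(t)`; consequently, if `Q^(t)` satisfied
the rate demand `ψ`, it remains feasible at iteration `t+1`, and the new optimal
sum-power is at most the previous objective value `Tr(Q^(t))` (the objective sequence is
non-increasing). -/
theorem sca_monotone {n k : ℕ}
    (A B : Matrix (Fin k) (Fin k) ℝ → Matrix (Fin n) (Fin n) ℝ)
    (Rbar : Matrix (Fin k) (Fin k) ℝ → ℝ)
    (Rtil : Matrix (Fin k) (Fin k) ℝ → Matrix (Fin n) (Fin n) ℝ → ℝ)
    (hRbar : ∀ Q, Rbar Q = Real.log (A Q).det - Real.log (B Q).det)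
    (hRtil : ∀ Q Γ, Rtil Q Γ =
        Real.log (A Q).det - Real.log Γ.det - (Γ⁻¹ * B Q).trace + n)
    (ψ : ℝ) (Qt : Matrix (Fin k) (Fin k) ℝ) (hQt : Qt.PosSemidef)
    (hBQt : (B Qt).PosDef) :
    Rtil Qt (B Qt) = Rbar Qt ∧
    (ψ ≤ Rbar Qt → Qt ∈ {Q : Matrix (Fin k) (Fin k) ℝ | Q.PosSemidef ∧ ψ ≤ Rtil Q (B Qt)}) ∧
    (ψ ≤ Rbar Qt →
      sInf (Matrix.trace '' {Q : Matrix (Fin k) (Fin k) ℝ | Q.PosSemidef ∧ ψ ≤ Rtil Q (B Qt)})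
        ≤ Qt.trace) := by
  have hinv : (B Qt)⁻¹ * B Qt = 1 := nonsing_inv_mul _ hBQt.det_pos.ne'.isUnit
  have htight : Rtil Qt (B Qt) = Rbar Qt := by
    rw [hRtil, hRbar, hinv, trace_one]
    simp [Fintype.card_fin]
  refine ⟨htight, fun h => ⟨hQt, htight ▸ h⟩, fun h => ?_⟩
  apply csInf_le
  · refine ⟨0, fun x hx => ?_⟩
    obtain ⟨Q, ⟨hQ, _⟩, rfl⟩ := hx
    calc (0:ℝ) = ∑ i, 0 := by simp
    _ ≤ Q.trace := Finset.sum_le_sum fun i _ => by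
        simpa using hQ.2 (Finsupp.single i 1)
  · exact ⟨Qt, ⟨hQt, htight ▸ h⟩, rfl⟩
end
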